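/- Let Σ be a symmetric real n×n matrix, Σ̃ its block-diagonal part with respect to a fixed block partition, E = Σ − Σ̃, and μ ∈ ℝⁿ. Define V = 2Tr(Σ²) + 4μᵀΣμ and Ṽ = 2Tr(Σ̃²) + 4μᵀΣ̃μ. Then |V − Ṽ| ≤ 2‖E‖_F² + 4‖μ‖₂²‖E‖₂, where ‖E‖₂ is the spectral (operator) norm. -/

import Mathlib

open scoped BigOperators Matrix

/-- Squared Frobenius norm of a real matrix. -/
noncomputable def frobSq {ι : Type*} [Fintype ι] (M : Matrix ι ι ℝ) : ℝ :=
  ∑ x, ∑ y, (M x y) ^ 2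

/-- Spectral norm (operator norm induced by the Euclidean norm) of a real matrix. -/
noncomputable def specNorm {ι : Type*} [Fintype ι] [DecidableEq ι] (M : Matrix ι ι ℝ) : ℝ :=
  ‖LinearMap.toContinuousLinearMap (Matrix.toEuclideanLin M)‖

/-- Euclidean norm of a real vector. -/
noncomputable def vecNorm {ι : Type*} [Fintype ι] (v : ι → ℝ) : ℝ :=
  Real.sqrt (∑ i, (v i) ^ 2)

lemma abs_dot_le {ι : Type*} [Fintype ι] [DecidableEq ι] (M : Matrix ι ι ℝ) (μ : ι → ℝ) :
    |μ ⬝ᵥ M.mulVec μ| ≤ (vecNorm μ) ^ 2 * specNorm M := by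
  set v : EuclideanSpace ℝ ι := (WithLp.equiv 2 (ι → ℝ)).symm μ with hv
  set T := LinearMap.toContinuousLinearMap (Matrix.toEuclideanLin M) with hT
  have hnv : ‖v‖ = vecNorm μ := by
    rw [EuclideanSpace.norm_eq, vecNorm]
    simp [Real.norm_eq_abs, sq_abs, hv]
  have hdot : μ ⬝ᵥ M.mulVec μ = inner ℝ v (T v) := by
    simp [hT, hv, dotProduct, PiLp.inner_apply, RCLike.inner_apply, mul_comm]
  rw [hdot]
  calc |inner ℝ v (T v)| ≤ ‖v‖ * ‖T v‖ := abs_real_inner_le_norm v (T v)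
    _ ≤ ‖v‖ * (‖T‖ * ‖v‖) := by
        gcongr; exact T.le_opNorm v
    _ = (vecNorm μ) ^ 2 * specNorm M := by rw [hnv, specNorm, ← hT]; ring

/-- For `Σ` symmetric block-partitioned, `Σ̃` its block-diagonal part, `E = Σ − Σ̃` and
`μ ∈ ℝⁿ`, setting `V = 2Tr(Σ²) + 4μᵀΣμ` and `Ṽ = 2Tr(Σ̃²) + 4μᵀΣ̃μ`, we have
`|V − Ṽ| ≤ 2‖E‖_F² + 4‖μ‖₂²‖E‖₂`. -/
theorem abs_V_sub_Vtilde_le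
    {C : ℕ} {n : Fin C → ℕ}
    (S : Matrix ((i : Fin C) × Fin (n i)) ((i : Fin C) × Fin (n i)) ℝ)
    (hS : S.IsSymm)
    (Stilde : Matrix ((i : Fin C) × Fin (n i)) ((i : Fin C) × Fin (n i)) ℝ)
    (hSt : ∀ x y, Stilde x y = if x.1 = y.1 then S x y else 0)
    (E : Matrix ((i : Fin C) × Fin (n i)) ((i : Fin C) × Fin (n i)) ℝ)
    (hE : E = S - Stilde)
    (μ : ((i : Fin C) × Fin (n i)) → ℝ)
    (V Vt : ℝ)
    (hV : V = 2 * (S * S).trace + 4 * (μ ⬝ᵥ S.mulVec μ))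
    (hVt : Vt = 2 * (Stilde * Stilde).trace + 4 * (μ ⬝ᵥ Stilde.mulVec μ)) :
    |V - Vt| ≤ 2 * frobSq E + 4 * (vecNorm μ) ^ 2 * specNorm E := by
  have hEsymm : ∀ x y, E x y = E y x := by
    intro x y
    have := hS.apply x y
    simp [hE, hSt, hS.apply y x]
    split <;> simp_all [eq_comm]
  have hEdiag : ∀ x y : (i : Fin C) × Fin (n i), x.1 = y.1 → E x y = 0 := by
    intro x y h; simp [hE, hSt, h]
  have hStoff : ∀ x y : (i : Fin C) × Fin (n i), x.1 ≠ y.1 → Stilde x y = 0 := by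
    intro x y h; simp [hSt, h]
  have htr : (S * S).trace - (Stilde * Stilde).trace = (E * E).trace := by
    have hSsum : S = Stilde + E := by rw [hE]; abel
    have hcross : (Stilde * E).trace = 0 := by
      simp only [Matrix.trace, Matrix.diag, Matrix.mul_apply]
      apply Finset.sum_eq_zero; intro x _
      apply Finset.sum_eq_zero; intro y _
      by_cases h : x.1 = y.1
      · rw [hEdiag y x h.symm, mul_zero]
      · rw [hStoff x y h, zero_mul]
    have hcross2 : (E * Stilde).trace = 0 := by
      rw [Matrix.trace_mul_comm]; exact hcross
    rw [hSsum]
    simp [Matrix.add_mul, Matrix.mul_add, Matrix.trace_add, hcross, hcross2]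
  have htrE : (E * E).trace = frobSq E := by
    simp only [Matrix.trace, Matrix.diag, Matrix.mul_apply, frobSq]
    apply Finset.sum_congr rfl; intro x _
    apply Finset.sum_congr rfl; intro y _
    rw [hEsymm x y]; ring
  have hdotE : μ ⬝ᵥ S.mulVec μ - μ ⬝ᵥ Stilde.mulVec μ = μ ⬝ᵥ E.mulVec μ := by
    rw [hE, Matrix.sub_mulVec, dotProduct_sub]
  have hVdiff : V - Vt = 2 * frobSq E + 4 * (μ ⬝ᵥ E.mulVec μ) := by
    rw [hV, hVt, ← htrE, ← htr, ← hdotE]; ring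
  rw [hVdiff]
  have h0 : 0 ≤ frobSq E := Finset.sum_nonneg fun x _ =>
    Finset.sum_nonneg fun y _ => sq_nonneg _
  calc |2 * frobSq E + 4 * (μ ⬝ᵥ E.mulVec μ)|
      ≤ |2 * frobSq E| + |4 * (μ ⬝ᵥ E.mulVec μ)| := abs_add_le _ _
    _ ≤ 2 * frobSq E + 4 * (vecNorm μ) ^ 2 * specNorm E := by
        rw [abs_of_nonneg (by linarith), abs_mul]
        have := abs_dot_le E μ
        rw [abs_of_nonneg (by norm_num : (0:ℝ) ≤ 4)]
        nlinarith
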